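/- arXiv:1509.07812 — 2 statements merged into one kernel-verified Lean document; each statement's English description precedes it below -/
import Mathlib

section
/- Let Φ = (φ_n)_n and Ψ = (ψ_n)_n be two frames for H and let Φ^{ad} = (φ^{ad}_n)_n be a fixed approximately dual frame of Φ. Then there exist constants ε > 0 and C > 0 (depending only on Φ, Ψ and Φ^{ad}) with the following property: if the difference sequence Φ − Ψ = (φ_n − ψ_n)_n is a Bessel sequence with Bessel bound M_{Φ−Ψ} ≤ ε, then there exists an approximately dual frame Ψ^{ad} = (ψ^{ad}_n)_n of Ψ such that T_Ψ U_{Ψ^{ad}} = T_Φ U_{Φ^{ad}} and the sequence Φ^{ad} − Ψ^{ad} = (φ^{ad}_n − ψ^{ad}_n)_n is a Bessel sequence with Bessel bound at most C · M_{Φ−Ψ}. -/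
set_option maxHeartbeats 1000000


noncomputable section

open ContinuousLinearMap
open scoped ComplexInnerProductSpace ENNReal

variable {H : Type*} [NormedAddCommGroup H] [InnerProductSpace ℂ H] [CompleteSpace H]

/-- The sequence space `ℓ²(ℕ)`. -/
abbrev Ltwo : Type := lp (fun _ : ℕ => ℂ) 2

/-- `φ` is a Bessel sequence with Bessel bound `M`:
`∑ₙ |⟨f, φₙ⟩|² ≤ M‖f‖²` for every `f`.  (Mathlib inner products are conjugate-linear in the
first slot, so `⟪φ n, f⟫` corresponds to the paper's `⟨f, φₙ⟩`.) -/
def IsBesselBound (φ : ℕ → H) (M : ℝ) : Prop :=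
  ∀ f : H, Summable (fun n => ‖(⟪φ n, f⟫ : ℂ)‖ ^ 2) ∧
    ∑' n, ‖(⟪φ n, f⟫ : ℂ)‖ ^ 2 ≤ M * ‖f‖ ^ 2

/-- `φ` is a frame with lower frame bound `m` and upper (Bessel) bound `M`. -/
def IsFrameWith (φ : ℕ → H) (m M : ℝ) : Prop :=
  0 < m ∧ IsBesselBound φ M ∧
    ∀ f : H, m * ‖f‖ ^ 2 ≤ ∑' n, ‖(⟪φ n, f⟫ : ℂ)‖ ^ 2

/-- `φ` is a frame for `H`. -/
def IsFrame (φ : ℕ → H) : Prop := ∃ m M, IsFrameWith φ m M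

/-- `U` is the analysis operator of `φ` : `U f = (⟨f, φₙ⟩)ₙ`.
The synthesis operator is then `T_φ = adjoint U` and the frame operator is
`S_φ = adjoint U ∘L U`. -/
def IsAnalysisOp (φ : ℕ → H) (U : H →L[ℂ] Ltwo) : Prop :=
  ∀ (f : H) (n : ℕ), U f n = (⟪φ n, f⟫ : ℂ)
lemma ltwo_tsum (c : Ltwo) : ∑' n, ‖c n‖ ^ 2 = ‖c‖ ^ 2 := by
  have h := lp.norm_rpow_eq_tsum (p := 2) (by norm_num) c
  simp only [ENNReal.toReal_ofNat, Real.rpow_two] at h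
  exact h.symm

lemma analysis_tsum {θ : ℕ → H} {U : H →L[ℂ] Ltwo} (hU : IsAnalysisOp θ U) (f : H) :
    ∑' n, ‖(⟪θ n, f⟫ : ℂ)‖ ^ 2 = ‖U f‖ ^ 2 := by
  rw [← ltwo_tsum (U f)]
  exact tsum_congr fun n => by rw [hU f n]

lemma exists_right_inverse {ψ : ℕ → H} {Uψ : H →L[ℂ] Ltwo} (hψ : IsFrame ψ)
    (hUψ : IsAnalysisOp ψ Uψ) :
    ∃ R : H →L[ℂ] Ltwo, adjoint Uψ ∘L R = 1 := by
  obtain ⟨m, M, hm, hB, hlow⟩ := hψ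
  set S : H →L[ℂ] H := adjoint Uψ ∘L Uψ with hS
  have hinner : ∀ f : H, (⟪S f, f⟫ : ℂ) = ((‖Uψ f‖ ^ 2 : ℝ) : ℂ) := by
    intro f
    rw [hS, comp_apply, adjoint_inner_left, @inner_self_eq_norm_sq_to_K]
    norm_cast
  have hlow2 : ∀ f : H, m * ‖f‖ ^ 2 ≤ ‖Uψ f‖ ^ 2 := by
    intro f
    have h := hlow f
    rwa [analysis_tsum hUψ] at h
  have hkey : ∀ f : H, m * ‖f‖ ≤ ‖S f‖ := by
    intro f
    rcases eq_or_ne f 0 with rfl | hf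
    · simp
    have h1 : m * ‖f‖ ^ 2 ≤ ‖(⟪S f, f⟫ : ℂ)‖ := by
      rw [hinner f, Complex.norm_real, Real.norm_eq_abs,
        abs_of_nonneg (by positivity)]
      exact hlow2 f
    have h2 : ‖(⟪S f, f⟫ : ℂ)‖ ≤ ‖S f‖ * ‖f‖ := norm_inner_le_norm _ _
    have hfpos : 0 < ‖f‖ := norm_pos_iff.mpr hf
    nlinarith
  have hanti : AntilipschitzWith (Real.toNNReal m⁻¹) S := by
    apply ContinuousLinearMap.antilipschitz_of_bound
    intro x
    rw [Real.coe_toNNReal _ (by positivity)]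
    calc ‖x‖ = m⁻¹ * (m * ‖x‖) := by field_simp
      _ ≤ m⁻¹ * ‖S x‖ := by
          have := hkey x
          gcongr
  have hker : LinearMap.ker (S : H →ₗ[ℂ] H) = ⊥ := by
    rw [LinearMap.ker_eq_bot']
    intro x hx
    have : S x = S 0 := by simpa using hx
    exact hanti.injective this
  have hclosed : IsClosed (Set.range S) := hanti.isClosed_range S.uniformContinuous
  have hset : ((LinearMap.range (S : H →ₗ[ℂ] H) : Submodule ℂ H) : Set H) = Set.range S := by
    ext x
    simp [LinearMap.mem_range, Set.mem_range]
  haveI hcs : CompleteSpace (LinearMap.range (S : H →ₗ[ℂ] H)) :=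
    IsClosed.completeSpace_coe (hs := by rw [hset]; exact hclosed)
  have hrange : LinearMap.range (S : H →ₗ[ℂ] H) = ⊤ := by
    rw [← Submodule.orthogonal_eq_bot_iff, Submodule.eq_bot_iff]
    intro x hx
    rw [Submodule.mem_orthogonal] at hx
    have h0 : (⟪S x, x⟫ : ℂ) = 0 := hx (S x) (LinearMap.mem_range_self _ x)
    rw [hinner x] at h0
    have h1 : ‖Uψ x‖ ^ 2 = 0 := by exact_mod_cast h0
    have h2 := hlow2 x
    rw [h1] at h2
    have hx2 : ‖x‖ ^ 2 ≤ 0 := (mul_le_mul_iff_right₀ hm).mp (by simpa using h2)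
    have hx3 : ‖x‖ ^ 2 = 0 := le_antisymm hx2 (sq_nonneg _)
    exact norm_eq_zero.mp (pow_eq_zero_iff two_ne_zero |>.mp hx3)
  set Se := ContinuousLinearEquiv.ofBijective S hker hrange with hSe
  refine ⟨Uψ ∘L (Se.symm : H →L[ℂ] H), ?_⟩
  ext f
  simp only [comp_apply, one_apply, ContinuousLinearEquiv.coe_coe]
  exact Se.apply_symm_apply f

lemma ltwo_summable (c : Ltwo) : Summable (fun n => ‖c n‖ ^ 2) := by
  have h : Memℓp (fun n => c n) 2 := lp.memℓp c
  rw [memℓp_gen_iff (p := 2) (by norm_num)] at h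
  simpa only [ENNReal.toReal_ofNat, Real.rpow_two] using h

lemma adjoint_single (X : H →L[ℂ] Ltwo) (f : H) (n : ℕ) :
    X f n = ⟪adjoint X (lp.single 2 n 1), f⟫ := by
  rw [adjoint_inner_left, lp.inner_single_left]
  simp


/-- Let Φ, Ψ be frames for H and Φᵃᵈ a fixed approximately dual frame of Φ
(a Bessel sequence with analysis operator `Vad` such that `‖Id - T_Φ Vad‖ < 1`).  Then there
are constants ε, C > 0 such that whenever Φ - Ψ is a Bessel sequence with bound
`M' ≤ ε`, there is an approximately dual frame Ψᵃᵈ of Ψ (with analysis operator `V`) such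
that `T_Ψ U_{Ψᵃᵈ} = T_Φ U_{Φᵃᵈ}` and Φᵃᵈ - Ψᵃᵈ is a Bessel sequence with bound `C * M'`. -/
theorem statement7 (φ ψ φad : ℕ → H) (hφ : IsFrame φ) (hψ : IsFrame ψ)
    (Uφ Uψ Vad : H →L[ℂ] Ltwo)
    (hUφ : IsAnalysisOp φ Uφ) (hUψ : IsAnalysisOp ψ Uψ)
    (Mad : ℝ) (hadB : IsBesselBound φad Mad) (hVad : IsAnalysisOp φad Vad)
    (had : ‖(1 : H →L[ℂ] H) - adjoint Uφ ∘L Vad‖ < 1) :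
    ∃ ε > (0 : ℝ), ∃ C > (0 : ℝ), ∀ M' : ℝ,
      IsBesselBound (fun n => φ n - ψ n) M' → M' ≤ ε →
      ∃ (ψad : ℕ → H) (V : H →L[ℂ] Ltwo),
        IsFrame ψad ∧ IsAnalysisOp ψad V ∧
        ‖(1 : H →L[ℂ] H) - adjoint Uψ ∘L V‖ < 1 ∧
        adjoint Uψ ∘L V = adjoint Uφ ∘L Vad ∧
        IsBesselBound (fun n => φad n - ψad n) (C * M') := by
  by_cases htriv : ∀ f : H, f = 0
  · refine ⟨1, one_pos, 1, one_pos, fun M' hB' hle => ⟨ψ, Uψ, hψ, hUψ, ?_, ?_, ?_⟩⟩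
    · have h0 : (1 : H →L[ℂ] H) - adjoint Uψ ∘L Uψ = 0 := by
        ext f; rw [htriv f]; simp
      rw [h0, norm_zero]; norm_num
    · ext f; rw [htriv f]; simp
    · intro f
      rw [htriv f]
      constructor
      · simp [summable_zero]
      · simp
  · push_neg at htriv
    obtain ⟨f₀, hf₀⟩ := htriv
    obtain ⟨R, hR⟩ := exists_right_inverse hψ hUψ
    set t : H →L[ℂ] H := (1 : H →L[ℂ] H) - adjoint Uφ ∘L Vad with ht
    set u : (H →L[ℂ] H)ˣ := Units.oneSub t had with hu
    have huval : (u : H →L[ℂ] H) = adjoint Uφ ∘L Vad := by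
      rw [hu, Units.val_oneSub, ht, sub_sub_cancel]
    set a : ℝ := ‖((u⁻¹ : (H →L[ℂ] H)ˣ) : H →L[ℂ] H)‖ * ‖adjoint Uφ‖ with ha
    have hVlow : ∀ f : H, ‖f‖ ≤ a * ‖Vad f‖ := by
      intro f
      have h1 : ((u⁻¹ : (H →L[ℂ] H)ˣ) : H →L[ℂ] H) ((u : H →L[ℂ] H) f) = f := by
        rw [← ContinuousLinearMap.mul_apply, u.inv_mul, ContinuousLinearMap.one_apply]
      calc ‖f‖ = ‖((u⁻¹ : (H →L[ℂ] H)ˣ) : H →L[ℂ] H) ((u : H →L[ℂ] H) f)‖ := by rw [h1]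
        _ ≤ ‖((u⁻¹ : (H →L[ℂ] H)ˣ) : H →L[ℂ] H)‖ * ‖(u : H →L[ℂ] H) f‖ := le_opNorm _ _
        _ = ‖((u⁻¹ : (H →L[ℂ] H)ˣ) : H →L[ℂ] H)‖ * ‖adjoint Uφ (Vad f)‖ := by
            rw [huval]; rfl
        _ ≤ ‖((u⁻¹ : (H →L[ℂ] H)ˣ) : H →L[ℂ] H)‖ * (‖adjoint Uφ‖ * ‖Vad f‖) := by
            gcongr; exact le_opNorm _ _
        _ = a * ‖Vad f‖ := by rw [ha]; ring
    have ha0 : 0 < a := by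
      by_contra hneg
      push_neg at hneg
      have h2 : a * ‖Vad f₀‖ ≤ 0 := mul_nonpos_of_nonpos_of_nonneg hneg (norm_nonneg _)
      exact hf₀ (norm_le_zero_iff.mp (le_trans (hVlow f₀) h2))
    set b : ℝ := ‖R‖ * ‖Vad‖ + 1 with hb
    have hRV0 : 0 ≤ ‖R‖ * ‖Vad‖ := by positivity
    have hb1 : ‖R‖ * ‖Vad‖ ≤ b := by rw [hb]; linarith
    have hb0 : 0 < b := by rw [hb]; linarith
    refine ⟨(1/(2*a*b))^2, by positivity, b^2, by positivity, fun M' hB' hle => ?_⟩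
    have hM'0 : 0 ≤ M' := by
      have h1 := (hB' f₀).2
      have h2 : (0:ℝ) ≤ ∑' n, ‖(⟪(fun k => φ k - ψ k) n, f₀⟫ : ℂ)‖^2 :=
        tsum_nonneg (fun n => by positivity)
      have h3 : 0 < ‖f₀‖ := norm_pos_iff.mpr hf₀
      nlinarith [mul_pos h3 h3]
    have hsq : Real.sqrt M' ≤ 1/(2*a*b) := by
      rw [show (1/(2*a*b)) = Real.sqrt ((1/(2*a*b))^2) from (Real.sqrt_sq (by positivity)).symm]
      exact Real.sqrt_le_sqrt hle
    set Dop : H →L[ℂ] Ltwo := Uφ - Uψ with hD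
    have hDan : IsAnalysisOp (fun n => φ n - ψ n) Dop := by
      intro f n
      have h1 : Dop f n = Uφ f n - Uψ f n := by rw [hD]; simp
      rw [h1, hUφ, hUψ, inner_sub_left]
    have hDnorm : ∀ g : H, ‖Dop g‖ ≤ Real.sqrt M' * ‖g‖ := by
      intro g
      have h1 : ‖Dop g‖^2 ≤ M' * ‖g‖^2 := by
        rw [← analysis_tsum hDan g]; exact (hB' g).2
      calc ‖Dop g‖ = Real.sqrt (‖Dop g‖^2) := (Real.sqrt_sq (norm_nonneg _)).symm
        _ ≤ Real.sqrt (M' * ‖g‖^2) := Real.sqrt_le_sqrt h1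
        _ = Real.sqrt M' * ‖g‖ := by
            rw [Real.sqrt_mul hM'0, Real.sqrt_sq (norm_nonneg _)]
    have hDop : ‖Dop‖ ≤ Real.sqrt M' := opNorm_le_bound _ (Real.sqrt_nonneg _) hDnorm
    have hDadj : ‖adjoint Dop‖ ≤ Real.sqrt M' := by
      rw [ContinuousLinearMap.adjoint.norm_map Dop]; exact hDop
    set X : H →L[ℂ] Ltwo := R ∘L (adjoint Dop ∘L Vad) with hX
    have hXapp : ∀ f : H, X f = R (adjoint Dop (Vad f)) := by
      intro f; rw [hX]; simp only [comp_apply]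
    have hXnorm : ∀ f : H, ‖X f‖ ≤ ‖R‖ * ‖Vad‖ * (Real.sqrt M' * ‖f‖) := by
      intro f
      have hR0 : (0:ℝ) ≤ ‖R‖ := norm_nonneg _
      have hs0 : (0:ℝ) ≤ Real.sqrt M' := Real.sqrt_nonneg _
      have e2 : ‖adjoint Dop (Vad f)‖ ≤ Real.sqrt M' * ‖Vad f‖ :=
        le_trans (le_opNorm _ _) (mul_le_mul_of_nonneg_right hDadj (norm_nonneg _))
      have e3 : ‖Vad f‖ ≤ ‖Vad‖ * ‖f‖ := le_opNorm _ _
      calc ‖X f‖ = ‖R (adjoint Dop (Vad f))‖ := by rw [hXapp]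
        _ ≤ ‖R‖ * ‖adjoint Dop (Vad f)‖ := le_opNorm _ _
        _ ≤ ‖R‖ * (Real.sqrt M' * ‖Vad f‖) := mul_le_mul_of_nonneg_left e2 hR0
        _ ≤ ‖R‖ * (Real.sqrt M' * (‖Vad‖ * ‖f‖)) :=
            mul_le_mul_of_nonneg_left (mul_le_mul_of_nonneg_left e3 hs0) hR0
        _ = ‖R‖ * ‖Vad‖ * (Real.sqrt M' * ‖f‖) := by ring
    set V : H →L[ℂ] Ltwo := Vad + X with hV
    set ψad : ℕ → H := fun n => φad n + adjoint X (lp.single 2 n 1) with hψad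
    have hVapp : ∀ (f : H) (n : ℕ), V f n = Vad f n + X f n := by
      intro f n; rw [hV]; simp
    have hVan : IsAnalysisOp ψad V := by
      intro f n
      have h1 : ψad n = φad n + adjoint X (lp.single 2 n 1) := rfl
      rw [hVapp f n, hVad f n, adjoint_single X f n, h1, inner_add_left]
    have hcompX : adjoint Uψ ∘L X = adjoint Dop ∘L Vad := by
      rw [hX, ← ContinuousLinearMap.comp_assoc, hR, ContinuousLinearMap.one_def,
        ContinuousLinearMap.id_comp]
    have hcomp : adjoint Uψ ∘L V = adjoint Uφ ∘L Vad := by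
      rw [hV, ContinuousLinearMap.comp_add, hcompX, hD, map_sub,
        ContinuousLinearMap.sub_comp]
      abel
    have hXsmall : ∀ f : H, ‖X f‖ ≤ 1/(2*a) * ‖f‖ := by
      intro f
      calc ‖X f‖ ≤ ‖R‖ * ‖Vad‖ * (Real.sqrt M' * ‖f‖) := hXnorm f
        _ ≤ b * (Real.sqrt M' * ‖f‖) := by
            gcongr
        _ ≤ b * (1/(2*a*b) * ‖f‖) := by
            gcongr
        _ = 1/(2*a) * ‖f‖ := by field_simp
    have hVlow2 : ∀ f : H, 1/(2*a) * ‖f‖ ≤ ‖V f‖ := by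
      intro f
      have h1 := hVlow f
      have h2 : ‖Vad f‖ ≤ ‖V f‖ + ‖X f‖ := by
        have h3 : Vad f = V f - X f := by rw [hV]; simp
        rw [h3]; exact norm_sub_le _ _
      have h3 := hXsmall f
      have h4 : a * ‖X f‖ ≤ 1/2 * ‖f‖ := by
        calc a * ‖X f‖ ≤ a * (1/(2*a) * ‖f‖) := mul_le_mul_of_nonneg_left h3 ha0.le
          _ = 1/2 * ‖f‖ := by field_simp
      have h5 : a * ‖Vad f‖ ≤ a * (‖V f‖ + ‖X f‖) := mul_le_mul_of_nonneg_left h2 ha0.le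
      have key : ‖f‖ ≤ 2*a*‖V f‖ := by nlinarith [norm_nonneg (V f), norm_nonneg f]
      calc 1/(2*a) * ‖f‖ ≤ 1/(2*a) * (2*a*‖V f‖) := by
            have : (0:ℝ) ≤ 1/(2*a) := by positivity
            exact mul_le_mul_of_nonneg_left key this
        _ = ‖V f‖ := by field_simp
    refine ⟨ψad, V, ?_, hVan, ?_, hcomp, ?_⟩
    · refine ⟨(1/(2*a))^2, ‖V‖^2, by positivity, ?_, ?_⟩
      · intro f
        have hfun : (fun n => ‖(⟪ψad n, f⟫ : ℂ)‖^2) = fun n => ‖V f n‖^2 := by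
          funext n; rw [hVan f n]
        constructor
        · rw [hfun]; exact ltwo_summable (V f)
        · rw [analysis_tsum hVan f]
          have h1 : ‖V f‖ ≤ ‖V‖ * ‖f‖ := le_opNorm _ _
          calc ‖V f‖^2 ≤ (‖V‖ * ‖f‖)^2 := pow_le_pow_left₀ (norm_nonneg _) h1 2
            _ = ‖V‖^2 * ‖f‖^2 := by ring
      · intro f
        rw [analysis_tsum hVan f]
        have h1 := hVlow2 f
        calc (1/(2*a))^2 * ‖f‖^2 = (1/(2*a) * ‖f‖)^2 := by ring
          _ ≤ ‖V f‖^2 := pow_le_pow_left₀ (by positivity) h1 2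
    · rw [hcomp]; exact had
    · intro f
      have hfun : (fun n => ‖(⟪φad n - ψad n, f⟫ : ℂ)‖^2) = fun n => ‖X f n‖^2 := by
        funext n
        have h1 : φad n - ψad n = -(adjoint X (lp.single 2 n 1)) := by
          have h2 : ψad n = φad n + adjoint X (lp.single 2 n 1) := rfl
          rw [h2]; abel
        rw [h1, inner_neg_left, norm_neg, ← adjoint_single]
      constructor
      · rw [hfun]; exact ltwo_summable (X f)
      · rw [hfun, ltwo_tsum (X f)]
        have h2 : ‖X f‖ ≤ b * (Real.sqrt M' * ‖f‖) := by
          calc ‖X f‖ ≤ ‖R‖ * ‖Vad‖ * (Real.sqrt M' * ‖f‖) := hXnorm f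
            _ ≤ b * (Real.sqrt M' * ‖f‖) := by gcongr
        calc ‖X f‖^2 ≤ (b * (Real.sqrt M' * ‖f‖))^2 := pow_le_pow_left₀ (norm_nonneg _) h2 2
          _ = b^2 * M' * ‖f‖^2 := by
              rw [mul_pow, mul_pow, Real.sq_sqrt hM'0]; ring
end
end

section
/- Let Φ = (φ_n)_n and Ψ = (ψ_n)_n be two frames for H such that Range(U_Φ) ⊊ Range(U_Ψ) or Range(U_Ψ) ⊊ Range(U_Φ) (strict inclusion of subspaces of ℓ²(ℕ)). Then Φ and Ψ are not g-dual frames, i.e., the operator T_Φ U_Ψ is not invertible; in particular, Φ and Ψ are not approximately dual frames, i.e., ‖Id_H − T_Φ U_Ψ‖ ≥ 1 and ‖Id_H − T_Ψ U_Φ‖ ≥ 1. -/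
noncomputable section

open ContinuousLinearMap
open scoped ComplexInnerProductSpace ENNReal

variable {H : Type*} [NormedAddCommGroup H] [InnerProductSpace ℂ H] [CompleteSpace H]

lemma ltwo_norm_sq (g : Ltwo) : ‖g‖ ^ 2 = ∑' n, ‖g n‖ ^ 2 := by
  have h := lp.norm_rpow_eq_tsum (p := 2) (by norm_num) g
  have h2 : ((2 : ℝ≥0∞)).toReal = (2 : ℝ) := by norm_num
  rw [h2] at h
  calc ‖g‖ ^ 2 = ‖g‖ ^ (2 : ℝ) := by rw [← Real.rpow_natCast]; norm_num
    _ = ∑' n, ‖g n‖ ^ (2 : ℝ) := h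
    _ = ∑' n, ‖g n‖ ^ 2 := by
        congr 1; ext n; rw [← Real.rpow_natCast]; norm_num

lemma analysis_lower (φ : ℕ → H) (m M : ℝ) (hφ : IsFrameWith φ m M)
    (U : H →L[ℂ] Ltwo) (hU : IsAnalysisOp φ U) (f : H) :
    Real.sqrt m * ‖f‖ ≤ ‖U f‖ := by
  obtain ⟨hm, _, hlow⟩ := hφ
  have h1 : m * ‖f‖ ^ 2 ≤ ‖U f‖ ^ 2 := by
    rw [ltwo_norm_sq]
    refine le_of_le_of_eq (hlow f) ?_
    congr 1; ext n; rw [hU f n]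
  have h2 : (Real.sqrt m * ‖f‖) ^ 2 ≤ ‖U f‖ ^ 2 := by
    rw [mul_pow, Real.sq_sqrt hm.le]; exact h1
  exact (pow_le_pow_iff_left₀ (by positivity) (norm_nonneg _) two_ne_zero).mp h2

lemma analysis_closed_range (φ : ℕ → H) (hφ : IsFrame φ)
    (U : H →L[ℂ] Ltwo) (hU : IsAnalysisOp φ U) : IsClosed (Set.range U) := by
  obtain ⟨m, M, hf⟩ := hφ
  have hm : 0 < m := hf.1
  have hs : 0 < Real.sqrt m := Real.sqrt_pos.mpr hm
  have anti : AntilipschitzWith ((Real.sqrt m)⁻¹).toNNReal U := by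
    refine AntilipschitzWith.of_le_mul_dist fun x y => ?_
    have := analysis_lower φ m M hf U hU (x - y)
    rw [dist_eq_norm, dist_eq_norm, ← map_sub]
    rw [Real.coe_toNNReal _ (by positivity)]
    have he : ‖x - y‖ = (Real.sqrt m)⁻¹ * (Real.sqrt m * ‖x - y‖) := by field_simp
    rw [he]
    exact mul_le_mul_of_nonneg_left this (by positivity)
  exact anti.isClosed_range U.uniformContinuous

lemma key (φ ψ : ℕ → H) (hφ : IsFrame φ) (hψ : IsFrame ψ)
    (Uφ Uψ : H →L[ℂ] Ltwo) (hUφ : IsAnalysisOp φ Uφ) (hUψ : IsAnalysisOp ψ Uψ)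
    (h : Set.range (⇑Uφ) ⊂ Set.range (⇑Uψ)) : ¬ IsUnit (adjoint Uφ ∘L Uψ) := by
  intro hA
  set K : Submodule ℂ Ltwo := LinearMap.range (Uφ : H →ₗ[ℂ] Ltwo) with hKdef
  have hKset : (K : Set Ltwo) = Set.range ⇑Uφ := by
    ext x; simp [hKdef, LinearMap.mem_range]
  have hKclosed : IsClosed (K : Set Ltwo) := by
    rw [hKset]; exact analysis_closed_range φ hφ Uφ hUφ
  haveI : CompleteSpace K := hKclosed.completeSpace_coe
  obtain ⟨d, hdψ, hdφ⟩ := Set.exists_of_ssubset h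
  set c : Ltwo := d - K.orthogonalProjectionOnto d with hcdef
  have hc0 : c ≠ 0 := by
    intro hc
    apply hdφ
    rw [← hKset]
    have : (K.orthogonalProjectionOnto d : Ltwo) = d := by
      have := sub_eq_zero.mp hc; exact this.symm
    rw [← this]; exact (K.orthogonalProjectionOnto d).2
  have hcperp : c ∈ Kᗮ := K.sub_starProjection_mem_orthogonal d
  have hadj : adjoint Uφ c = 0 := by
    apply ext_inner_right ℂ
    intro v
    rw [adjoint_inner_left, inner_zero_left]
    have : ⟪Uφ v, c⟫ = 0 := hcperp (Uφ v) ⟨v, rfl⟩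
    rw [← inner_conj_symm, this, map_zero]
  have hcψ : c ∈ LinearMap.range (Uψ : H →ₗ[ℂ] Ltwo) := by
    obtain ⟨z, hz⟩ := hdψ
    have hp : (K.orthogonalProjectionOnto d : Ltwo) ∈ Set.range ⇑Uψ :=
      h.1 (by rw [← hKset]; exact (K.orthogonalProjectionOnto d).2)
    obtain ⟨y, hy⟩ := hp
    exact sub_mem ⟨z, hz⟩ ⟨y, hy⟩
  obtain ⟨f, hf⟩ := hcψ
  have hAf : (adjoint Uφ ∘L Uψ) f = 0 := by
    rw [comp_apply, show Uψ f = c from hf, hadj]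
  have hfz : f = 0 := by
    obtain ⟨u, hu⟩ := hA
    have h1 : f = (↑u⁻¹ : H →L[ℂ] H) ((adjoint Uφ ∘L Uψ) f) := by
      rw [← hu, ← mul_apply_eq_comp, u.inv_mul, one_apply_eq_self]
    rw [hAf, map_zero] at h1
    exact h1
  apply hc0
  rw [← hf, hfz, map_zero]


/-- Let Φ, Ψ be frames for H such that one of `Range U_Φ`, `Range U_Ψ` is
strictly contained in the other.  Then Φ and Ψ are not g-dual frames (`T_Φ U_Ψ` is not
invertible); in particular they are not approximately dual frames:
`‖Id - T_Φ U_Ψ‖ ≥ 1` and `‖Id - T_Ψ U_Φ‖ ≥ 1`. -/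
theorem statement15 (φ ψ : ℕ → H) (hφ : IsFrame φ) (hψ : IsFrame ψ)
    (Uφ Uψ : H →L[ℂ] Ltwo) (hUφ : IsAnalysisOp φ Uφ) (hUψ : IsAnalysisOp ψ Uψ)
    (hrange : Set.range (⇑Uφ) ⊂ Set.range (⇑Uψ) ∨ Set.range (⇑Uψ) ⊂ Set.range (⇑Uφ)) :
    ¬ IsUnit (adjoint Uφ ∘L Uψ) ∧
    1 ≤ ‖(1 : H →L[ℂ] H) - adjoint Uφ ∘L Uψ‖ ∧
    1 ≤ ‖(1 : H →L[ℂ] H) - adjoint Uψ ∘L Uφ‖ := by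
  have hnotA : ¬ IsUnit (adjoint Uφ ∘L Uψ) := by
    rcases hrange with h | h
    · exact key φ ψ hφ hψ Uφ Uψ hUφ hUψ h
    · intro hA
      apply key ψ φ hψ hφ Uψ Uφ hUψ hUφ h
      have := hA.star
      rwa [star_eq_adjoint, adjoint_comp, adjoint_adjoint] at this
  have hnotA2 : ¬ IsUnit (adjoint Uψ ∘L Uφ) := by
    intro hA
    apply hnotA
    have := hA.star
    rwa [star_eq_adjoint, adjoint_comp, adjoint_adjoint] at this
  refine ⟨hnotA, ?_, ?_⟩
  · by_contra hlt
    push_neg at hlt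
    exact hnotA (by
      simpa [sub_sub_cancel] using
        (Units.oneSub ((1 : H →L[ℂ] H) - adjoint Uφ ∘L Uψ) hlt).isUnit)
  · by_contra hlt
    push_neg at hlt
    exact hnotA2 (by
      simpa [sub_sub_cancel] using
        (Units.oneSub ((1 : H →L[ℂ] H) - adjoint Uψ ∘L Uφ) hlt).isUnit)
end
end
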